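/- Convex sparse decomposition: if v ∈ ℝ^p satisfies ‖v‖_∞ ≤ θ and ‖v‖₁ ≤ s·θ for some θ > 0 and positive integer s, then v can be written as a convex combination v = ∑_{i=1}^N λᵢ uᵢ with λᵢ ≥ 0, ∑ λᵢ = 1, where each uᵢ is s-sparse, supp(uᵢ) ⊆ supp(v), ‖uᵢ‖₁ ≤ ‖v‖₁, and ‖uᵢ‖_∞ ≤ θ. -/

import Mathlib

open Finset

def Decomp (p : ℕ) (θ : ℝ) (s : ℕ) (v : Fin p → ℝ) : Prop :=
  ∃ (N : ℕ) (lam : Fin N → ℝ) (u : Fin N → Fin p → ℝ),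
      (∀ i, 0 ≤ lam i) ∧ (∑ i, lam i = 1) ∧
      (∀ j, v j = ∑ i, lam i * u i j) ∧
      (∀ i, (Finset.univ.filter fun j => u i j ≠ 0).card ≤ s) ∧
      (∀ i j, u i j ≠ 0 → v j ≠ 0) ∧
      (∀ i, ∑ j, |u i j| ≤ ∑ j, |v j|) ∧
      (∀ i j, |u i j| ≤ θ)

lemma combine (p : ℕ) (θ : ℝ) (s : ℕ) (v w₁ w₂ : Fin p → ℝ) (a b : ℝ)
    (ha : 0 ≤ a) (hb : 0 ≤ b) (hab : a + b = 1)
    (hv : ∀ k, v k = a * w₁ k + b * w₂ k)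
    (h1s : ∀ k, w₁ k ≠ 0 → v k ≠ 0) (h2s : ∀ k, w₂ k ≠ 0 → v k ≠ 0)
    (h1l : ∑ k, |w₁ k| ≤ ∑ k, |v k|) (h2l : ∑ k, |w₂ k| ≤ ∑ k, |v k|)
    (H1 : Decomp p θ s w₁) (H2 : Decomp p θ s w₂) : Decomp p θ s v := by
  obtain ⟨N₁, lam₁, u₁, hl₁, hs₁, hvj₁, hcard₁, hsupp₁, hl1₁, hinf₁⟩ := H1
  obtain ⟨N₂, lam₂, u₂, hl₂, hs₂, hvj₂, hcard₂, hsupp₂, hl1₂, hinf₂⟩ := H2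
  refine ⟨N₁ + N₂, Fin.addCases (fun i => a * lam₁ i) (fun i => b * lam₂ i),
    Fin.addCases u₁ u₂, ?_, ?_, ?_, ?_, ?_, ?_, ?_⟩
  · intro i
    refine Fin.addCases (fun i => ?_) (fun i => ?_) i <;> simp only [Fin.addCases_left, Fin.addCases_right]
    · exact mul_nonneg ha (hl₁ i)
    · exact mul_nonneg hb (hl₂ i)
  · rw [Fin.sum_univ_add]
    simp only [Fin.addCases_left, Fin.addCases_right, ← mul_sum, hs₁, hs₂]
    simpa using hab
  · intro j
    rw [Fin.sum_univ_add]
    simp only [Fin.addCases_left, Fin.addCases_right, mul_assoc, ← mul_sum]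
    rw [← hvj₁ j, ← hvj₂ j, hv j]
  · intro i
    refine Fin.addCases (fun i => ?_) (fun i => ?_) i <;>
      simp only [Fin.addCases_left, Fin.addCases_right]
    · exact hcard₁ i
    · exact hcard₂ i
  · intro i
    refine Fin.addCases (fun i => ?_) (fun i => ?_) i <;>
      simp only [Fin.addCases_left, Fin.addCases_right] <;> intro j hj
    · exact h1s j (hsupp₁ i j hj)
    · exact h2s j (hsupp₂ i j hj)
  · intro i
    refine Fin.addCases (fun i => ?_) (fun i => ?_) i <;>
      simp only [Fin.addCases_left, Fin.addCases_right]
    · exact (hl1₁ i).trans h1l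
    · exact (hl1₂ i).trans h2l
  · intro i
    refine Fin.addCases (fun i => ?_) (fun i => ?_) i <;>
      simp only [Fin.addCases_left, Fin.addCases_right]
    · exact hinf₁ i
    · exact hinf₂ i

lemma small (p : ℕ) (θ : ℝ) (s : ℕ) (hθ : 0 < θ) (v : Fin p → ℝ)
    (hinf : ∀ i, |v i| ≤ θ) (h1 : ∑ i, |v i| ≤ s * θ)
    (hF : (Finset.univ.filter fun j => v j ≠ 0 ∧ |v j| < θ).card ≤ 1) :
    Decomp p θ s v := by
  classical
  set F := Finset.univ.filter fun j => v j ≠ 0 ∧ |v j| < θ with hFdef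
  set G := Finset.univ.filter fun j => |v j| = θ with hGdef
  have hGsum : ∑ j ∈ G, |v j| = G.card * θ := by
    rw [Finset.sum_congr rfl (fun j hj => (Finset.mem_filter.mp hj).2)]
    simp [mul_comm]
    exact Or.inl rfl
  have hsub : (Finset.univ.filter fun j => v j ≠ 0) ⊆ G ∪ F := by
    intro j hj
    have hj' := (Finset.mem_filter.mp hj).2
    rcases lt_or_eq_of_le (hinf j) with h | h
    · exact Finset.mem_union_right _ (Finset.mem_filter.mpr ⟨Finset.mem_univ _, hj', h⟩)
    · exact Finset.mem_union_left _ (Finset.mem_filter.mpr ⟨Finset.mem_univ _, h⟩)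
  have hdisj : Disjoint G F := by
    rw [Finset.disjoint_left]
    intro j hjG hjF
    exact absurd (Finset.mem_filter.mp hjG).2 (ne_of_lt (Finset.mem_filter.mp hjF).2.2)
  have hGle : (G.card : ℝ) ≤ s := by
    rcases Nat.le_one_iff_eq_zero_or_eq_one.mp hF with h0 | h1'
    · have hGsub : G ⊆ Finset.univ := Finset.subset_univ _
      have : ∑ j ∈ G, |v j| ≤ ∑ j, |v j| :=
        Finset.sum_le_sum_of_subset_of_nonneg hGsub (fun j _ _ => abs_nonneg _)
      rw [hGsum] at this
      have := this.trans h1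
      exact le_of_mul_le_mul_right (by linarith) hθ
    · obtain ⟨j₀, hj₀⟩ := Finset.card_eq_one.mp h1'
      have hj₀F : j₀ ∈ F := by rw [hj₀]; exact Finset.mem_singleton_self _
      have hj₀pos : 0 < |v j₀| := abs_pos.mpr (Finset.mem_filter.mp hj₀F).2.1
      have hsum : ∑ j ∈ G ∪ F, |v j| ≤ ∑ j, |v j| :=
        Finset.sum_le_sum_of_subset_of_nonneg (Finset.subset_univ _) (fun j _ _ => abs_nonneg _)
      rw [Finset.sum_union hdisj, hGsum, hj₀, Finset.sum_singleton] at hsum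
      have : (G.card : ℝ) * θ < s * θ := by linarith
      have := lt_of_mul_lt_mul_right this hθ.le
      linarith
  have hcard : (Finset.univ.filter fun j => v j ≠ 0).card ≤ s := by
    have h2 : (Finset.univ.filter fun j => v j ≠ 0).card ≤ G.card + F.card :=
      (Finset.card_le_card hsub).trans (Finset.card_union_le _ _)
    rcases Nat.le_one_iff_eq_zero_or_eq_one.mp hF with h0 | h1'
    · have : (G.card : ℝ) ≤ s := hGle
      have hGs : G.card ≤ s := by exact_mod_cast this
      omega
    · -- here need strict: card G < s
      obtain ⟨j₀, hj₀⟩ := Finset.card_eq_one.mp h1'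
      have hj₀F : j₀ ∈ F := by rw [hj₀]; exact Finset.mem_singleton_self _
      have hj₀pos : 0 < |v j₀| := abs_pos.mpr (Finset.mem_filter.mp hj₀F).2.1
      have hsum : ∑ j ∈ G ∪ F, |v j| ≤ ∑ j, |v j| :=
        Finset.sum_le_sum_of_subset_of_nonneg (Finset.subset_univ _) (fun j _ _ => abs_nonneg _)
      rw [Finset.sum_union hdisj, hGsum, hj₀, Finset.sum_singleton] at hsum
      have hlt : (G.card : ℝ) * θ < s * θ := by linarith
      have hlt' : (G.card : ℝ) < s := lt_of_mul_lt_mul_right hlt hθ.le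
      have hGs : G.card < s := by exact_mod_cast hlt'
      omega
  refine ⟨1, fun _ => 1, fun _ => v, fun _ => zero_le_one, by simp, fun j => by simp,
    fun _ => hcard, fun _ j hj => hj, fun _ => le_refl _, fun _ i => hinf i⟩


lemma shift (p : ℕ) (θ : ℝ) (v : Fin p → ℝ) (hinf : ∀ k, |v k| ≤ θ)
    (i j : Fin p) (hij : i ≠ j)
    (hi : v i ≠ 0 ∧ |v i| < θ) (hj : v j ≠ 0 ∧ |v j| < θ) :
    ∃ (w : Fin p → ℝ) (t : ℝ), 0 < t ∧
      (∀ k, w k = v k + t * (if k = i then (if 0 < v i then (1:ℝ) else -1)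
        else if k = j then -(if 0 < v j then (1:ℝ) else -1) else 0)) ∧
      (∀ k, |w k| ≤ θ) ∧ (∑ k, |w k| = ∑ k, |v k|) ∧ (∀ k, w k ≠ 0 → v k ≠ 0) ∧
      ((Finset.univ.filter fun k => w k ≠ 0 ∧ |w k| < θ).card <
        (Finset.univ.filter fun k => v k ≠ 0 ∧ |v k| < θ).card) := by
  classical
  set εi : ℝ := if 0 < v i then (1:ℝ) else -1 with hεidef
  set εj : ℝ := if 0 < v j then (1:ℝ) else -1 with hεjdef
  have hepsi : εi * |v i| = v i := by
    rw [hεidef]; split_ifs with h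
    · rw [abs_of_pos h, one_mul]
    · rw [abs_of_nonpos (not_lt.mp h)]; ring
  have hepsj : εj * |v j| = v j := by
    rw [hεjdef]; split_ifs with h
    · rw [abs_of_pos h, one_mul]
    · rw [abs_of_nonpos (not_lt.mp h)]; ring
  have habsepsi : |εi| = 1 := by rw [hεidef]; split_ifs <;> simp
  have habsepsj : |εj| = 1 := by rw [hεjdef]; split_ifs <;> simp
  set t : ℝ := min (θ - |v i|) |v j| with htdef
  have ht : 0 < t := lt_min (by linarith [hi.2]) (abs_pos.mpr hj.1)
  have ht1 : t ≤ θ - |v i| := min_le_left _ _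
  have ht2 : t ≤ |v j| := min_le_right _ _
  set w : Fin p → ℝ := fun k => v k + t * (if k = i then εi else if k = j then -εj else 0)
    with hwdef
  have hwi : w i = εi * (|v i| + t) := by
    have h1 : w i = v i + t * εi := by simp [hwdef]
    rw [h1, mul_add, hepsi]; ring
  have hwj : w j = εj * (|v j| - t) := by
    have h1 : w j = v j + t * -εj := by simp [hwdef, Ne.symm hij]
    rw [h1, mul_sub, hepsj]; ring
  have hwk : ∀ k, k ≠ i → k ≠ j → w k = v k := by
    intro k h1 h2
    simp only [hwdef, if_neg h1, if_neg h2, mul_zero, add_zero]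
  have habswi : |w i| = |v i| + t := by
    rw [hwi, abs_mul, habsepsi, one_mul, abs_of_nonneg (by positivity)]
  have habswj : |w j| = |v j| - t := by
    rw [hwj, abs_mul, habsepsj, one_mul, abs_of_nonneg (by linarith)]
  have hinfw : ∀ k, |w k| ≤ θ := by
    intro k
    by_cases hki : k = i
    · subst hki; rw [habswi]; linarith
    by_cases hkj : k = j
    · subst hkj; rw [habswj]; linarith [hinf k, ht]
    · rw [hwk k hki hkj]; exact hinf k
  have hsum : ∑ k, |w k| = ∑ k, |v k| := by
    have hzero : ∀ x ∈ (Finset.univ : Finset (Fin p)), x ∉ ({i, j} : Finset (Fin p)) →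
        |w x| - |v x| = 0 := by
      intro k _ hk
      simp only [Finset.mem_insert, Finset.mem_singleton, not_or] at hk
      rw [hwk k hk.1 hk.2]; ring
    have key := Finset.sum_subset (Finset.subset_univ ({i, j} : Finset (Fin p))) hzero
    rw [Finset.sum_pair hij, habswi, habswj] at key
    have key2 : ∑ k, (|w k| - |v k|) = 0 := by rw [← key]; ring
    rw [Finset.sum_sub_distrib] at key2
    linarith
  have hsupp : ∀ k, w k ≠ 0 → v k ≠ 0 := by
    intro k hk
    by_cases hki : k = i
    · subst hki; exact hi.1
    by_cases hkj : k = j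
    · subst hkj; exact hj.1
    · rw [hwk k hki hkj] at hk; exact hk
  have hFsub : (Finset.univ.filter fun k => w k ≠ 0 ∧ |w k| < θ) ⊆
      (Finset.univ.filter fun k => v k ≠ 0 ∧ |v k| < θ) := by
    intro k hk
    have hk' := (Finset.mem_filter.mp hk).2
    refine Finset.mem_filter.mpr ⟨Finset.mem_univ _, ?_⟩
    by_cases hki : k = i
    · subst hki; exact hi
    by_cases hkj : k = j
    · subst hkj; exact hj
    · rwa [hwk k hki hkj] at hk'
  have hwitness : ∃ x, x ∈ (Finset.univ.filter fun k => v k ≠ 0 ∧ |v k| < θ) ∧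
      x ∉ (Finset.univ.filter fun k => w k ≠ 0 ∧ |w k| < θ) := by
    rcases le_total (θ - |v i|) (|v j|) with h | h
    · refine ⟨i, Finset.mem_filter.mpr ⟨Finset.mem_univ _, hi⟩, ?_⟩
      intro hmem
      have := (Finset.mem_filter.mp hmem).2.2
      rw [habswi, htdef, min_eq_left h] at this
      linarith
    · refine ⟨j, Finset.mem_filter.mpr ⟨Finset.mem_univ _, hj⟩, ?_⟩
      intro hmem
      have := (Finset.mem_filter.mp hmem).2.1
      apply this
      rw [hwj, htdef, min_eq_right h]
      ring
  obtain ⟨x, hx1, hx2⟩ := hwitness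
  exact ⟨w, t, ht, fun k => rfl, hinfw, hsum, hsupp,
    Finset.card_lt_card ((Finset.ssubset_iff_of_subset hFsub).mpr ⟨x, hx1, hx2⟩)⟩

lemma aux (p : ℕ) (θ : ℝ) (s : ℕ) (hθ : 0 < θ) :
    ∀ (m : ℕ) (v : Fin p → ℝ),
      (Finset.univ.filter fun j => v j ≠ 0 ∧ |v j| < θ).card ≤ m →
      (∀ i, |v i| ≤ θ) → (∑ i, |v i|) ≤ s * θ → Decomp p θ s v := by
  intro m
  induction m with
  | zero =>
    intro v hm hinf h1
    exact small p θ s hθ v hinf h1 (hm.trans (Nat.zero_le 1))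
  | succ m ih =>
    intro v hm hinf h1
    by_cases hF : (Finset.univ.filter fun j => v j ≠ 0 ∧ |v j| < θ).card ≤ 1
    · exact small p θ s hθ v hinf h1 hF
    · push_neg at hF
      obtain ⟨i, hi, j, hj, hij⟩ := Finset.one_lt_card.mp hF
      have hi' := (Finset.mem_filter.mp hi).2
      have hj' := (Finset.mem_filter.mp hj).2
      obtain ⟨w₁, tp, htp, hform₁, hinf₁, hsum₁, hsupp₁, hcard₁⟩ :=
        shift p θ v hinf i j hij hi' hj'
      obtain ⟨w₂, tn, htn, hform₂, hinf₂, hsum₂, hsupp₂, hcard₂⟩ :=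
        shift p θ v hinf j i hij.symm hj' hi'
      have hT : (0:ℝ) < tp + tn := by linarith
      refine combine p θ s v w₁ w₂ (tn / (tp + tn)) (tp / (tp + tn))
        (by positivity) (by positivity) ?_ ?_ hsupp₁ hsupp₂
        (le_of_eq hsum₁) (le_of_eq hsum₂)
        (ih w₁ (by omega) hinf₁ (hsum₁ ▸ h1))
        (ih w₂ (by omega) hinf₂ (hsum₂ ▸ h1))
      · rw [← add_div, add_comm tn tp, div_self hT.ne']
      · intro k
        rw [hform₁ k, hform₂ k]
        by_cases hki : k = i
        · have hkj : k ≠ j := by rw [hki]; exact hij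
          rw [if_pos hki, if_neg hkj, if_pos hki]
          field_simp
          split_ifs <;> ring
        · by_cases hkj : k = j
          · rw [if_neg hki, if_pos hkj, if_pos hkj]
            field_simp
            split_ifs <;> ring
          · rw [if_neg hki, if_neg hkj, if_neg hkj, if_neg hki]
            field_simp
            ring

theorem stmt_7 (p : ℕ) (v : Fin p → ℝ) (θ : ℝ) (s : ℕ) (hθ : 0 < θ) (hs : 0 < s)
    (hinf : ∀ i, |v i| ≤ θ) (h1 : ∑ i, |v i| ≤ s * θ) :
    ∃ (N : ℕ) (lam : Fin N → ℝ) (u : Fin N → Fin p → ℝ),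
      (∀ i, 0 ≤ lam i) ∧ (∑ i, lam i = 1) ∧
      (∀ j, v j = ∑ i, lam i * u i j) ∧
      (∀ i, (Finset.univ.filter fun j => u i j ≠ 0).card ≤ s) ∧
      (∀ i j, u i j ≠ 0 → v j ≠ 0) ∧
      (∀ i, ∑ j, |u i j| ≤ ∑ j, |v j|) ∧
      (∀ i j, |u i j| ≤ θ) := by
  exact aux p θ s hθ (Finset.univ.filter fun j => v j ≠ 0 ∧ |v j| < θ).card v le_rfl hinf h1
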